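/- For μ ∈ ℝⁿ, the sum over i of the restricted weighted symmetric functions satisfies Σ_{i=1}^{n} σ_{k,i}^∞(μ₀, μ) = (n−k) σ_k^∞(μ₀, μ) + μ₀ σ_{k−1}^∞(μ₀, μ). -/

import Mathlib

/-- The `k`-th elementary symmetric polynomial of `μ : Fin n → ℝ`. -/
noncomputable def esymm {n : ℕ} (k : ℕ) (μ : Fin n → ℝ) : ℝ :=
  ∑ s ∈ Finset.powersetCard k (Finset.univ : Finset (Fin n)), ∏ i ∈ s, μ i

/-- The weighted elementary symmetric function
`σ_k^∞(μ₀, μ) = ∑_{j=0}^k (μ₀^j / j!) σ_{k-j}(μ)`. -/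
noncomputable def esymmInf {n : ℕ} (k : ℕ) (μ0 : ℝ) (μ : Fin n → ℝ) : ℝ :=
  ∑ j ∈ Finset.range (k + 1), μ0 ^ j / (Nat.factorial j) * esymm (k - j) μ

open Finset in
lemma esymm_comp_succAbove {m k : ℕ} (i : Fin (m + 1)) (μ : Fin (m + 1) → ℝ) :
    esymm k (μ ∘ i.succAbove) =
      ∑ t ∈ powersetCard k ({i}ᶜ : Finset (Fin (m + 1))), ∏ j ∈ t, μ j := by
  have h : ({i}ᶜ : Finset (Fin (m + 1))) = Finset.univ.map (Fin.succAboveEmb i) := by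
    rw [Finset.map_eq_image]
    exact (Fin.image_succAbove_univ i).symm
  rw [h, powersetCard_map, Finset.sum_map]
  refine Finset.sum_congr rfl fun t ht => ?_
  rw [show (Finset.mapEmbedding (Fin.succAboveEmb i)).toEmbedding t
      = t.map (Fin.succAboveEmb i) from rfl, Finset.prod_map]
  rfl

open Finset in
lemma sum_esymm_remove {m : ℕ} (k : ℕ) (μ : Fin (m + 1) → ℝ) :
    ∑ i : Fin (m + 1), esymm k (μ ∘ i.succAbove) = ((m + 1 : ℝ) - k) * esymm k μ := by
  by_cases hk : k ≤ m + 1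
  · have key : ∀ i : Fin (m+1), esymm k (μ ∘ i.succAbove) =
        ∑ t ∈ powersetCard k (Finset.univ : Finset (Fin (m+1))),
          if i ∉ t then ∏ j ∈ t, μ j else 0 := by
      intro i
      rw [esymm_comp_succAbove, ← Finset.sum_filter]
      congr 1
      ext t
      rw [Finset.mem_powersetCard, Finset.mem_filter, Finset.mem_powersetCard]
      constructor
      · rintro ⟨hs, hc⟩
        exact ⟨⟨Finset.subset_univ t, hc⟩, fun h => by simpa using hs h⟩
      · rintro ⟨⟨-, hc⟩, hi⟩
        refine ⟨fun x hx => ?_, hc⟩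
        simp only [Finset.mem_compl, Finset.mem_singleton]
        rintro rfl; exact hi hx
    simp only [key]
    rw [Finset.sum_comm]
    rw [esymm, Finset.mul_sum]
    refine Finset.sum_congr rfl fun t ht => ?_
    rw [Finset.sum_ite, Finset.sum_const_zero, add_zero, Finset.sum_const]
    have hc : (Finset.univ.filter (fun i => i ∉ t)).card = m + 1 - k := by
      rw [Finset.filter_not, Finset.card_sdiff_of_subset (Finset.filter_subset _ _)]
      simp only [Finset.card_univ, Fintype.card_fin]
      congr 1
      rw [Finset.filter_mem_eq_inter, Finset.univ_inter]
      exact (Finset.mem_powersetCard.mp ht).2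
    rw [hc, nsmul_eq_mul]
    have : ((m + 1 - k : ℕ) : ℝ) = (m + 1 : ℝ) - k := by
      push_cast [Nat.cast_sub hk]; ring
    rw [this]
  · push_neg at hk
    have h1 : esymm k μ = 0 := by
      rw [esymm, Finset.powersetCard_eq_empty.mpr (by simpa using hk), Finset.sum_empty]
    have h2 : ∀ i : Fin (m+1), esymm k (μ ∘ i.succAbove) = 0 := by
      intro i
      rw [esymm, Finset.powersetCard_eq_empty.mpr (by simp; omega), Finset.sum_empty]
    simp [h1, h2]

/-- `∑_{i=1}^{n} σ_{k,i}^∞(μ₀, μ) = (n−k) σ_k^∞(μ₀, μ) + μ₀ σ_{k−1}^∞(μ₀, μ)` where `μ` has `n`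
variables (here `n = m + 1` and removal of the `i`-th variable is via `Fin.succAbove`). -/
theorem sum_esymmInf_remove {m : ℕ} (k : ℕ) (hk : 1 ≤ k) (μ0 : ℝ) (μ : Fin (m + 1) → ℝ) :
    ∑ i : Fin (m + 1), esymmInf k μ0 (μ ∘ i.succAbove) =
      ((m + 1 : ℝ) - k) * esymmInf k μ0 μ + μ0 * esymmInf (k - 1) μ0 μ := by
  unfold esymmInf
  rw [Finset.sum_comm]
  have step1 : ∀ j ∈ Finset.range (k + 1),
      ∑ i : Fin (m + 1), μ0 ^ j / (Nat.factorial j) * esymm (k - j) (μ ∘ i.succAbove)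
        = μ0 ^ j / (Nat.factorial j) * ((((m + 1 : ℝ) - k) + j) * esymm (k - j) μ) := by
    intro j hj
    rw [← Finset.mul_sum, sum_esymm_remove]
    have hjk : j ≤ k := by simpa using Nat.lt_succ_iff.mp (Finset.mem_range.mp hj)
    congr 2
    push_cast [Nat.cast_sub hjk]
    ring
  rw [Finset.sum_congr rfl step1]
  have split : ∑ j ∈ Finset.range (k + 1),
      μ0 ^ j / (Nat.factorial j) * ((((m + 1 : ℝ) - k) + j) * esymm (k - j) μ)
      = ((m + 1 : ℝ) - k) * ∑ j ∈ Finset.range (k + 1),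
          μ0 ^ j / (Nat.factorial j) * esymm (k - j) μ
        + ∑ j ∈ Finset.range (k + 1), (j : ℝ) * (μ0 ^ j / (Nat.factorial j)) * esymm (k - j) μ := by
    rw [Finset.mul_sum, ← Finset.sum_add_distrib]
    exact Finset.sum_congr rfl fun j hj => by ring
  rw [split]
  congr 1
  have hk1 : k - 1 + 1 = k := Nat.succ_pred_eq_of_pos hk
  rw [Finset.sum_range_succ']
  simp only [Nat.cast_zero, zero_mul, add_zero, zero_add]
  rw [Finset.mul_sum, ← hk1]
  refine Finset.sum_congr rfl fun j hj => ?_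
  have hfac : (Nat.factorial (j + 1) : ℝ) = (j + 1) * Nat.factorial j := by
    push_cast [Nat.factorial_succ]; ring
  have hsub : k - 1 + 1 - (j + 1) = k - 1 - j := by omega
  rw [hsub, hfac, pow_succ]
  rw [show k - 1 + 1 - 1 - j = k - 1 - j by omega]
  have hj0 : (Nat.factorial j : ℝ) ≠ 0 := Nat.cast_ne_zero.mpr (Nat.factorial_ne_zero j)
  field_simp
  push_cast
  ring
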